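/- Let c : H⊗H → H be a Laplace pairing which is normalized (c(x⊗1) = ε(x)·1 = c(1⊗x)) and conormalized (ε(c(x⊗y)) = ε(x)ε(y)), and let # = c⋆m be the circle (hash) product x # y = c(x₍₁₎⊗y₍₁₎)·(x₍₂₎y₍₂₎). Then (H, #, η, Δ, ε) is a bialgebra — that is, Δ∘# = (#⊗#)∘(id⊗sw⊗id)∘(Δ⊗Δ) and ε(x # y) = ε(x)ε(y) — if and only if c satisfies condition (e): Δ∘c = (c⊗c)∘(id⊗sw⊗id)∘(Δ⊗Δ). -/

import Mathlib

open TensorProduct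

noncomputable section

variable (R H : Type*) [CommRing R] [CommRing H] [HopfAlgebra R H]

/-- The comultiplication on `H ⊗ H`: `Δ₂ = (id ⊗ sw ⊗ id) ∘ (Δ ⊗ Δ)`. -/
def comul2 : H ⊗[R] H →ₗ[R] (H ⊗[R] H) ⊗[R] (H ⊗[R] H) :=
  (TensorProduct.tensorTensorTensorComm R H H H H).toLinearMap ∘ₗ
    TensorProduct.map Coalgebra.comul Coalgebra.comul

/-- The counit on `H ⊗ H`: `ε₂(x ⊗ y) = ε(x)ε(y)`. -/
def counit2 : H ⊗[R] H →ₗ[R] R :=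
  LinearMap.mul' R R ∘ₗ TensorProduct.map Coalgebra.counit Coalgebra.counit

/-- Convolution product `f ⋆ g = m ∘ (f ⊗ g) ∘ Δ₂` on `Hom_R(H ⊗ H, H)`. -/
def conv2 (f g : H ⊗[R] H →ₗ[R] H) : H ⊗[R] H →ₗ[R] H :=
  LinearMap.mul' R H ∘ₗ TensorProduct.map f g ∘ₗ comul2 R H

/-- `a` is a Laplace pairing: `a(x ⊗ yz) = a(x₍₁₎⊗y)·a(x₍₂₎⊗z)` and
`a(xy ⊗ z) = a(x⊗z₍₁₎)·a(y⊗z₍₂₎)`. -/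
def IsLaplace (a : H ⊗[R] H →ₗ[R] H) : Prop :=
  (a ∘ₗ TensorProduct.map LinearMap.id (LinearMap.mul' R H) =
    LinearMap.mul' R H ∘ₗ TensorProduct.map a a ∘ₗ
      (TensorProduct.tensorTensorTensorComm R H H H H).toLinearMap ∘ₗ
      TensorProduct.map Coalgebra.comul LinearMap.id) ∧
  (a ∘ₗ TensorProduct.map (LinearMap.mul' R H) LinearMap.id =
    LinearMap.mul' R H ∘ₗ TensorProduct.map a a ∘ₗ
      (TensorProduct.tensorTensorTensorComm R H H H H).toLinearMap ∘ₗ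
      TensorProduct.map LinearMap.id Coalgebra.comul)

/-- Condition (e): `Δ ∘ c = (c ⊗ c) ∘ (id ⊗ sw ⊗ id) ∘ (Δ ⊗ Δ)`. -/
def CondE (a : H ⊗[R] H →ₗ[R] H) : Prop :=
  Coalgebra.comul ∘ₗ a = TensorProduct.map a a ∘ₗ comul2 R H

open Coalgebra LinearMap HopfAlgebra

/-! ### Auxiliary structural lemmas -/

theorem aux_map_map {M₁ M₂ N₁ N₂ P₁ P₂ : Type*}
    [AddCommGroup M₁] [AddCommGroup M₂] [AddCommGroup N₁] [AddCommGroup N₂]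
    [AddCommGroup P₁] [AddCommGroup P₂]
    [Module R M₁] [Module R M₂] [Module R N₁] [Module R N₂] [Module R P₁] [Module R P₂]
    (f₂ : N₁ →ₗ[R] P₁) (g₂ : N₂ →ₗ[R] P₂) (f₁ : M₁ →ₗ[R] N₁) (g₁ : M₂ →ₗ[R] N₂)
    (w : M₁ ⊗[R] M₂) :
    TensorProduct.map f₂ g₂ (TensorProduct.map f₁ g₁ w)
      = TensorProduct.map (f₂ ∘ₗ f₁) (g₂ ∘ₗ g₁) w := by
  rw [TensorProduct.map_comp]; rfl

theorem aux_tttc_nat {M₁ M₂ M₃ M₄ N₁ N₂ N₃ N₄ : Type*}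
    [AddCommGroup M₁] [AddCommGroup M₂] [AddCommGroup M₃] [AddCommGroup M₄]
    [AddCommGroup N₁] [AddCommGroup N₂] [AddCommGroup N₃] [AddCommGroup N₄]
    [Module R M₁] [Module R M₂] [Module R M₃] [Module R M₄]
    [Module R N₁] [Module R N₂] [Module R N₃] [Module R N₄]
    (f : M₁ →ₗ[R] N₁) (g : M₂ →ₗ[R] N₂) (h : M₃ →ₗ[R] N₃) (k : M₄ →ₗ[R] N₄)
    (w : (M₁ ⊗[R] M₂) ⊗[R] (M₃ ⊗[R] M₄)) :
    (TensorProduct.tensorTensorTensorComm R N₁ N₂ N₃ N₄)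
      (TensorProduct.map (TensorProduct.map f g) (TensorProduct.map h k) w)
    = TensorProduct.map (TensorProduct.map f h) (TensorProduct.map g k)
      ((TensorProduct.tensorTensorTensorComm R M₁ M₂ M₃ M₄) w) := by
  have : (TensorProduct.tensorTensorTensorComm R N₁ N₂ N₃ N₄).toLinearMap ∘ₗ
      TensorProduct.map (TensorProduct.map f g) (TensorProduct.map h k)
    = TensorProduct.map (TensorProduct.map f h) (TensorProduct.map g k) ∘ₗ
      (TensorProduct.tensorTensorTensorComm R M₁ M₂ M₃ M₄).toLinearMap := by
    apply TensorProduct.ext_fourfold'; intro a b c d; simp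
  simpa using LinearMap.congr_fun this w

theorem aux_mul2_apply (u : (H ⊗[R] H) ⊗[R] (H ⊗[R] H)) :
    LinearMap.mul' R (H ⊗[R] H) u
      = TensorProduct.map (LinearMap.mul' R H) (LinearMap.mul' R H)
          ((TensorProduct.tensorTensorTensorComm R H H H H) u) := by
  have : LinearMap.mul' R (H ⊗[R] H)
      = TensorProduct.map (LinearMap.mul' R H) (LinearMap.mul' R H) ∘ₗ
        (TensorProduct.tensorTensorTensorComm R H H H H).toLinearMap := by
    apply TensorProduct.ext_fourfold'; intro a b c d
    simp [Algebra.TensorProduct.tmul_mul_tmul]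
  simpa using LinearMap.congr_fun this u

theorem aux_L1_apply (w : H ⊗[R] H) :
    Coalgebra.comul (LinearMap.mul' R H w)
      = LinearMap.mul' R (H ⊗[R] H) (TensorProduct.map Coalgebra.comul Coalgebra.comul w) := by
  have : (Coalgebra.comul (R := R) (A := H)) ∘ₗ LinearMap.mul' R H
      = LinearMap.mul' R (H ⊗[R] H) ∘ₗ TensorProduct.map Coalgebra.comul Coalgebra.comul := by
    apply TensorProduct.ext'; intro x y; simp [Bialgebra.comul_mul]
  simpa using LinearMap.congr_fun this w

theorem aux_perm8_apply (w : ((H ⊗[R] H) ⊗[R] (H ⊗[R] H)) ⊗[R] ((H ⊗[R] H) ⊗[R] (H ⊗[R] H))) :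
    (TensorProduct.tensorTensorTensorComm R (H ⊗[R] H) (H ⊗[R] H) (H ⊗[R] H) (H ⊗[R] H))
      (TensorProduct.map (TensorProduct.tensorTensorTensorComm R H H H H).toLinearMap
          (TensorProduct.tensorTensorTensorComm R H H H H).toLinearMap
        ((TensorProduct.tensorTensorTensorComm R (H ⊗[R] H) (H ⊗[R] H) (H ⊗[R] H) (H ⊗[R] H))
          (TensorProduct.map (TensorProduct.tensorTensorTensorComm R H H H H).toLinearMap
            (TensorProduct.tensorTensorTensorComm R H H H H).toLinearMap w)))
    = TensorProduct.map (TensorProduct.tensorTensorTensorComm R H H H H).toLinearMap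
        (TensorProduct.tensorTensorTensorComm R H H H H).toLinearMap
        ((TensorProduct.tensorTensorTensorComm R (H ⊗[R] H) (H ⊗[R] H) (H ⊗[R] H) (H ⊗[R] H)) w) := by
  have : (TensorProduct.tensorTensorTensorComm R (H ⊗[R] H) (H ⊗[R] H) (H ⊗[R] H) (H ⊗[R] H)).toLinearMap ∘ₗ
      TensorProduct.map (TensorProduct.tensorTensorTensorComm R H H H H).toLinearMap
        (TensorProduct.tensorTensorTensorComm R H H H H).toLinearMap ∘ₗ
      (TensorProduct.tensorTensorTensorComm R (H ⊗[R] H) (H ⊗[R] H) (H ⊗[R] H) (H ⊗[R] H)).toLinearMap ∘ₗ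
      TensorProduct.map (TensorProduct.tensorTensorTensorComm R H H H H).toLinearMap
        (TensorProduct.tensorTensorTensorComm R H H H H).toLinearMap
    = TensorProduct.map (TensorProduct.tensorTensorTensorComm R H H H H).toLinearMap
        (TensorProduct.tensorTensorTensorComm R H H H H).toLinearMap ∘ₗ
      (TensorProduct.tensorTensorTensorComm R (H ⊗[R] H) (H ⊗[R] H) (H ⊗[R] H) (H ⊗[R] H)).toLinearMap := by
    ext a b c d e f g h
    simp
  simpa using LinearMap.congr_fun this w

/-! ### Cocommutativity: the middle-swap lemma -/

theorem aux_lc :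
    (TensorProduct.leftComm R H H H).toLinearMap ∘ₗ (TensorProduct.assoc R H H H).toLinearMap
    = (TensorProduct.assoc R H H H).toLinearMap ∘ₗ
        LinearMap.rTensor H (TensorProduct.comm R H H).toLinearMap := by
  apply TensorProduct.ext_threefold; intro a b c; simp

theorem aux_M0_apply
    (hcoc : (TensorProduct.comm R H H).toLinearMap ∘ₗ Coalgebra.comul
      = (Coalgebra.comul : H →ₗ[R] H ⊗[R] H)) (a : H) :
    (TensorProduct.leftComm R H H H)
        (LinearMap.lTensor H (Coalgebra.comul (R := R) (A := H)) (Coalgebra.comul a))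
    = LinearMap.lTensor H (Coalgebra.comul (R := R) (A := H)) (Coalgebra.comul a) := by
  rw [← Coalgebra.coassoc_apply a]
  have h2 := LinearMap.congr_fun (aux_lc R H)
    (LinearMap.rTensor H (Coalgebra.comul (R := R) (A := H)) (Coalgebra.comul a))
  simp only [LinearMap.comp_apply, LinearEquiv.coe_coe] at h2
  rw [h2, ← LinearMap.comp_apply, ← LinearMap.rTensor_comp, hcoc]

theorem aux_M0
    (hcoc : (TensorProduct.comm R H H).toLinearMap ∘ₗ Coalgebra.comul
      = (Coalgebra.comul : H →ₗ[R] H ⊗[R] H)) :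
    (TensorProduct.leftComm R H H H).toLinearMap ∘ₗ
      (TensorProduct.map LinearMap.id (Coalgebra.comul (R := R) (A := H)) ∘ₗ Coalgebra.comul)
    = TensorProduct.map LinearMap.id (Coalgebra.comul (R := R) (A := H)) ∘ₗ Coalgebra.comul := by
  apply LinearMap.ext; intro a
  exact aux_M0_apply R H hcoc a

theorem aux_C2 :
    (TensorProduct.assoc R H H (H ⊗[R] H)).toLinearMap ∘ₗ
      (TensorProduct.tensorTensorTensorComm R H H H H).toLinearMap
    = TensorProduct.map LinearMap.id (TensorProduct.leftComm R H H H).toLinearMap ∘ₗ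
      (TensorProduct.assoc R H H (H ⊗[R] H)).toLinearMap := by
  apply TensorProduct.ext_fourfold'; intro a b c d; simp

theorem aux_M_apply
    (hcoc : (TensorProduct.comm R H H).toLinearMap ∘ₗ Coalgebra.comul
      = (Coalgebra.comul : H →ₗ[R] H ⊗[R] H)) (a : H) :
    (TensorProduct.tensorTensorTensorComm R H H H H)
        (TensorProduct.map Coalgebra.comul Coalgebra.comul (Coalgebra.comul a))
    = TensorProduct.map (Coalgebra.comul (R := R) (A := H)) Coalgebra.comul
        (Coalgebra.comul a) := by
  apply (TensorProduct.assoc R H H (H ⊗[R] H)).injective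
  have e1 : TensorProduct.map (Coalgebra.comul (R := R) (A := H)) Coalgebra.comul
        (Coalgebra.comul a)
      = TensorProduct.map (TensorProduct.map LinearMap.id LinearMap.id) Coalgebra.comul
          (TensorProduct.map Coalgebra.comul LinearMap.id (Coalgebra.comul a)) := by
    rw [aux_map_map]; simp [TensorProduct.map_id]
  have e2 : (TensorProduct.assoc R H H (H ⊗[R] H))
        (TensorProduct.map (Coalgebra.comul (R := R) (A := H)) Coalgebra.comul
          (Coalgebra.comul a))
      = TensorProduct.map LinearMap.id (TensorProduct.map LinearMap.id Coalgebra.comul)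
          (TensorProduct.map LinearMap.id (Coalgebra.comul (R := R) (A := H))
            (Coalgebra.comul a)) := by
    rw [e1, ← TensorProduct.map_map_assoc]
    congr 1
    have h1 : TensorProduct.map (Coalgebra.comul (R := R) (A := H)) LinearMap.id
        = LinearMap.rTensor H Coalgebra.comul := rfl
    rw [h1]
    have h2 : TensorProduct.map LinearMap.id (Coalgebra.comul (R := R) (A := H))
        = LinearMap.lTensor H Coalgebra.comul := rfl
    rw [h2, Coalgebra.coassoc_apply]
  have e3 := LinearMap.congr_fun (aux_C2 R H)
    (TensorProduct.map (Coalgebra.comul (R := R) (A := H)) Coalgebra.comul (Coalgebra.comul a))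
  simp only [LinearMap.comp_apply, LinearEquiv.coe_coe] at e3
  rw [e3, e2]
  rw [aux_map_map, aux_map_map]
  have e4 : (LinearMap.id ∘ₗ LinearMap.id : H →ₗ[R] H) = LinearMap.id := by simp
  rw [e4]
  have e5 : ((TensorProduct.leftComm R H H H).toLinearMap ∘ₗ
        TensorProduct.map LinearMap.id (Coalgebra.comul (R := R) (A := H))) ∘ₗ Coalgebra.comul
      = TensorProduct.map LinearMap.id (Coalgebra.comul (R := R) (A := H)) ∘ₗ Coalgebra.comul := by
    rw [LinearMap.comp_assoc]; exact aux_M0 R H hcoc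
  rw [e5, ← aux_map_map]

theorem aux_Mcomp
    (hcoc : (TensorProduct.comm R H H).toLinearMap ∘ₗ Coalgebra.comul
      = (Coalgebra.comul : H →ₗ[R] H ⊗[R] H)) :
    (TensorProduct.tensorTensorTensorComm R H H H H).toLinearMap ∘ₗ
      (TensorProduct.map (Coalgebra.comul (R := R) (A := H)) Coalgebra.comul ∘ₗ Coalgebra.comul)
    = TensorProduct.map (Coalgebra.comul (R := R) (A := H)) Coalgebra.comul ∘ₗ
        Coalgebra.comul := by
  apply LinearMap.ext; intro a
  simpa using aux_M_apply R H hcoc a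

/-! ### The key lemma: convolution preserves comul-compatibility -/

theorem aux_key
    (hcoc : (TensorProduct.comm R H H).toLinearMap ∘ₗ Coalgebra.comul
      = (Coalgebra.comul : H →ₗ[R] H ⊗[R] H))
    (f g : H ⊗[R] H →ₗ[R] H)
    (hf : Coalgebra.comul ∘ₗ f = TensorProduct.map f f ∘ₗ comul2 R H)
    (hg : Coalgebra.comul ∘ₗ g = TensorProduct.map g g ∘ₗ comul2 R H) :
    Coalgebra.comul ∘ₗ conv2 R H f g
      = TensorProduct.map (conv2 R H f g) (conv2 R H f g) ∘ₗ comul2 R H := by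
  apply LinearMap.ext; intro z
  simp only [LinearMap.comp_apply]
  set W := TensorProduct.map
      (TensorProduct.map (Coalgebra.comul (R := R) (A := H)) Coalgebra.comul ∘ₗ Coalgebra.comul)
      (TensorProduct.map (Coalgebra.comul (R := R) (A := H)) Coalgebra.comul ∘ₗ Coalgebra.comul) z
    with hW
  have hWW : TensorProduct.map (TensorProduct.tensorTensorTensorComm R H H H H).toLinearMap
      (TensorProduct.tensorTensorTensorComm R H H H H).toLinearMap W = W := by
    rw [hW, aux_map_map, aux_Mcomp R H hcoc]
  have inner : TensorProduct.map (comul2 R H) (comul2 R H) (comul2 R H z)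
      = TensorProduct.map (TensorProduct.tensorTensorTensorComm R H H H H).toLinearMap
          (TensorProduct.tensorTensorTensorComm R H H H H).toLinearMap
          ((TensorProduct.tensorTensorTensorComm R (H ⊗[R] H) (H ⊗[R] H) (H ⊗[R] H) (H ⊗[R] H))
            W) := by
    show TensorProduct.map (comul2 R H) (comul2 R H)
        ((TensorProduct.tensorTensorTensorComm R H H H H)
          (TensorProduct.map Coalgebra.comul Coalgebra.comul z)) = _
    rw [show comul2 R H = (TensorProduct.tensorTensorTensorComm R H H H H).toLinearMap ∘ₗ
        TensorProduct.map Coalgebra.comul Coalgebra.comul from rfl]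
    rw [← aux_map_map]
    congr 1
    rw [← aux_tttc_nat]
    congr 1
    rw [aux_map_map, hW]
  have LHS : Coalgebra.comul (conv2 R H f g z)
      = TensorProduct.map (LinearMap.mul' R H) (LinearMap.mul' R H)
          (TensorProduct.map (TensorProduct.map f g) (TensorProduct.map f g)
            ((TensorProduct.tensorTensorTensorComm R (H ⊗[R] H) (H ⊗[R] H) (H ⊗[R] H) (H ⊗[R] H))
              (TensorProduct.map (comul2 R H) (comul2 R H) (comul2 R H z)))) := by
    rw [show conv2 R H f g z
        = LinearMap.mul' R H (TensorProduct.map f g (comul2 R H z)) from rfl]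
    rw [aux_L1_apply, aux_map_map, hf, hg, ← aux_map_map, aux_mul2_apply]
    rw [aux_tttc_nat]
  have RHS : TensorProduct.map (conv2 R H f g) (conv2 R H f g) (comul2 R H z)
      = TensorProduct.map (LinearMap.mul' R H) (LinearMap.mul' R H)
          (TensorProduct.map (TensorProduct.map f g) (TensorProduct.map f g)
            (TensorProduct.map (comul2 R H) (comul2 R H) (comul2 R H z))) := by
    rw [show conv2 R H f g
        = LinearMap.mul' R H ∘ₗ (TensorProduct.map f g ∘ₗ comul2 R H) from rfl]
    rw [← aux_map_map, ← aux_map_map]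
  rw [LHS, RHS, inner]
  rw [← hWW, aux_perm8_apply, hWW]

/-! ### `m` satisfies the comul-compatibility -/

theorem aux_hm :
    Coalgebra.comul ∘ₗ LinearMap.mul' R H
      = TensorProduct.map (LinearMap.mul' R H) (LinearMap.mul' R H) ∘ₗ comul2 R H := by
  apply LinearMap.ext; intro z
  simp only [LinearMap.comp_apply]
  rw [aux_L1_apply, aux_mul2_apply]
  rfl

/-! ### Counit lemmas -/

theorem aux_sum_counit (x : H) (r : Coalgebra.Repr R x (H × H)) :
    ∑ i ∈ r.index, (Coalgebra.counit (r.left i) : R) * Coalgebra.counit (r.right i)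
      = Coalgebra.counit x := by
  have h := congrArg (fun t => (Coalgebra.counit (R := R) (A := H)) ((TensorProduct.rid R H) t))
    (Coalgebra.sum_tmul_counit_eq (R := R) r)
  simp only [map_sum, TensorProduct.rid_tmul, map_smul, smul_eq_mul, one_smul] at h
  rw [← h]
  exact Finset.sum_congr rfl fun i _ => mul_comm _ _

theorem conv2_tmul (f g : H ⊗[R] H →ₗ[R] H) (x y : H)
    (rx : Coalgebra.Repr R x (H × H)) (ry : Coalgebra.Repr R y (H × H)) :
    conv2 R H f g (x ⊗ₜ[R] y) = ∑ i ∈ rx.index, ∑ j ∈ ry.index,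
      f (rx.left i ⊗ₜ[R] ry.left j) * g (rx.right i ⊗ₜ[R] ry.right j) := by
  show LinearMap.mul' R H (TensorProduct.map f g
      ((TensorProduct.tensorTensorTensorComm R H H H H)
        (TensorProduct.map Coalgebra.comul Coalgebra.comul (x ⊗ₜ[R] y)))) = _
  rw [TensorProduct.map_tmul, ← rx.eq, ← ry.eq]
  simp [TensorProduct.sum_tmul, TensorProduct.tmul_sum, TensorProduct.map_tmul,
    TensorProduct.tensorTensorTensorComm_tmul, LinearMap.mul'_apply]
  exact Finset.sum_comm

theorem aux_counit_part (c : H ⊗[R] H →ₗ[R] H)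
    (hconorm : ∀ x y : H, Coalgebra.counit (c (x ⊗ₜ[R] y))
      = (Coalgebra.counit x : R) * Coalgebra.counit y) :
    Coalgebra.counit ∘ₗ conv2 R H c (LinearMap.mul' R H) = counit2 R H := by
  apply TensorProduct.ext'; intro x y
  simp only [LinearMap.comp_apply]
  have rx := Coalgebra.Repr.arbitrary R x
  have ry := Coalgebra.Repr.arbitrary R y
  rw [conv2_tmul R H _ _ x y rx ry]
  rw [map_sum]
  have e1 : ∀ i ∈ rx.index, (Coalgebra.counit (R := R) (A := H))
        (∑ j ∈ ry.index, c (rx.left i ⊗ₜ[R] ry.left j)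
            * LinearMap.mul' R H (rx.right i ⊗ₜ[R] ry.right j))
      = ∑ j ∈ ry.index,
        ((Coalgebra.counit (rx.left i) : R) * Coalgebra.counit (rx.right i)) *
        ((Coalgebra.counit (ry.left j) : R) * Coalgebra.counit (ry.right j)) := by
    intro i _
    rw [map_sum]
    refine Finset.sum_congr rfl fun j _ => ?_
    rw [LinearMap.mul'_apply, Bialgebra.counit_mul, hconorm, Bialgebra.counit_mul]
    ring
  rw [Finset.sum_congr rfl e1, ← Finset.sum_mul_sum, aux_sum_counit, aux_sum_counit]
  show _ = LinearMap.mul' R R (TensorProduct.map Coalgebra.counit Coalgebra.counit (x ⊗ₜ[R] y))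
  simp

/-! ### Convolution algebra on Hom(H, H ⊗ H) and `Δ ∘ S = (S ⊗ S) ∘ Δ` -/

def cv (u v : H →ₗ[R] H ⊗[R] H) : H →ₗ[R] H ⊗[R] H :=
  LinearMap.mul' R (H ⊗[R] H) ∘ₗ TensorProduct.map u v ∘ₗ Coalgebra.comul

theorem cv_repr (u v : H →ₗ[R] H ⊗[R] H) (x : H) (r : Coalgebra.Repr R x (H × H)) :
    cv R H u v x = ∑ i ∈ r.index, u (r.left i) * v (r.right i) := by
  show LinearMap.mul' R (H ⊗[R] H) (TensorProduct.map u v (Coalgebra.comul x)) = _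
  rw [← r.eq]
  simp

theorem aux_eps_right (x : H) (r : Coalgebra.Repr R x (H × H)) :
    ∑ i ∈ r.index, (Coalgebra.counit (r.right i) : R) • r.left i = x := by
  have h := congrArg (TensorProduct.rid R H) (Coalgebra.sum_tmul_counit_eq (R := R) r)
  simp only [map_sum, TensorProduct.rid_tmul, one_smul] at h
  exact h

theorem aux_eps_left (x : H) (r : Coalgebra.Repr R x (H × H)) :
    ∑ i ∈ r.index, (Coalgebra.counit (r.left i) : R) • r.right i = x := by
  have h := congrArg (TensorProduct.lid R H) (Coalgebra.sum_counit_tmul_eq (R := R) r)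
  simp only [map_sum, TensorProduct.lid_tmul, one_smul] at h
  exact h

theorem cv_unit_right (u : H →ₗ[R] H ⊗[R] H) :
    cv R H u ((Algebra.linearMap R (H ⊗[R] H)) ∘ₗ Coalgebra.counit) = u := by
  apply LinearMap.ext; intro x
  have r := Coalgebra.Repr.arbitrary R x
  rw [cv_repr R H _ _ x r]
  have e : ∀ i ∈ r.index, u (r.left i) *
      ((Algebra.linearMap R (H ⊗[R] H)) ∘ₗ Coalgebra.counit) (r.right i)
      = (Coalgebra.counit (r.right i) : R) • u (r.left i) := by
    intro i _
    rw [LinearMap.comp_apply, Algebra.linearMap_apply, mul_comm, ← Algebra.smul_def]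
  rw [Finset.sum_congr rfl e]
  have h2 : ∑ i ∈ r.index, (Coalgebra.counit (r.right i) : R) • u (r.left i)
      = u (∑ i ∈ r.index, (Coalgebra.counit (r.right i) : R) • r.left i) := by
    rw [map_sum]
    exact Finset.sum_congr rfl fun i _ => (map_smul u _ _).symm
  rw [h2, aux_eps_right R H x r]

theorem cv_unit_left (v : H →ₗ[R] H ⊗[R] H) :
    cv R H ((Algebra.linearMap R (H ⊗[R] H)) ∘ₗ Coalgebra.counit) v = v := by
  apply LinearMap.ext; intro x
  have r := Coalgebra.Repr.arbitrary R x
  rw [cv_repr R H _ _ x r]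
  have e : ∀ i ∈ r.index, ((Algebra.linearMap R (H ⊗[R] H)) ∘ₗ Coalgebra.counit) (r.left i)
      * v (r.right i)
      = (Coalgebra.counit (r.left i) : R) • v (r.right i) := by
    intro i _
    rw [LinearMap.comp_apply, Algebra.linearMap_apply, ← Algebra.smul_def]
  rw [Finset.sum_congr rfl e]
  have h2 : ∑ i ∈ r.index, (Coalgebra.counit (r.left i) : R) • v (r.right i)
      = v (∑ i ∈ r.index, (Coalgebra.counit (r.left i) : R) • r.right i) := by
    rw [map_sum]
    exact Finset.sum_congr rfl fun i _ => (map_smul v _ _).symm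
  rw [h2, aux_eps_left R H x r]

theorem cv_assoc (u v w : H →ₗ[R] H ⊗[R] H) :
    cv R H (cv R H u v) w = cv R H u (cv R H v w) := by
  apply LinearMap.ext; intro x
  have r := Coalgebra.Repr.arbitrary R x
  have r1 : ∀ i : r.ι, Coalgebra.Repr R (r.left i) (H × H) := fun i => Coalgebra.Repr.arbitrary R _
  have r2 : ∀ i : r.ι, Coalgebra.Repr R (r.right i) (H × H) := fun i => Coalgebra.Repr.arbitrary R _
  rw [cv_repr R H _ _ x r, cv_repr R H _ _ x r]
  have key := Coalgebra.sum_map_tmul_tmul_eq (R := R) (f := u) (g := v) (h := w) (a := x)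
    (repr := r) (a₁ := r1) (a₂ := r2)
  have key2 := congrArg (fun t => (LinearMap.mul' R (H ⊗[R] H))
      ((LinearMap.lTensor (H ⊗[R] H) (LinearMap.mul' R (H ⊗[R] H))) t)) key
  simp only [map_sum, LinearMap.lTensor_tmul, LinearMap.mul'_apply] at key2
  have l1 : ∀ i ∈ r.index, cv R H u v (r.left i) * w (r.right i)
      = ∑ j ∈ (r1 i).index, u ((r1 i).left j) * ((v ((r1 i).right j)) * w (r.right i)) := by
    intro i _
    rw [cv_repr R H _ _ _ (r1 i), Finset.sum_mul]
    exact Finset.sum_congr rfl fun j _ => mul_assoc _ _ _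
  have l2 : ∀ i ∈ r.index, u (r.left i) * cv R H v w (r.right i)
      = ∑ j ∈ (r2 i).index, u (r.left i) * (v ((r2 i).left j) * w ((r2 i).right j)) := by
    intro i _
    rw [cv_repr R H _ _ _ (r2 i), Finset.mul_sum]
  rw [Finset.sum_congr rfl l1, Finset.sum_congr rfl l2]
  exact key2.symm

theorem aux_inv1 :
    cv R H (Coalgebra.comul ∘ₗ (HopfAlgebra.antipode R)) Coalgebra.comul
      = (Algebra.linearMap R (H ⊗[R] H)) ∘ₗ Coalgebra.counit := by
  apply LinearMap.ext; intro x
  have r := Coalgebra.Repr.arbitrary R x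
  rw [cv_repr R H _ _ x r]
  have e : ∀ i ∈ r.index,
      (Coalgebra.comul ∘ₗ HopfAlgebra.antipode (R := R) (A := H)) (r.left i)
        * Coalgebra.comul (r.right i)
      = Coalgebra.comul (HopfAlgebra.antipode (R := R) (r.left i) * r.right i) := by
    intro i _
    rw [LinearMap.comp_apply, Bialgebra.comul_mul]
  rw [Finset.sum_congr rfl e, ← map_sum, HopfAlgebra.sum_antipode_mul_eq_algebraMap_counit]
  simp

theorem aux_eps_eps (x : H) :
    TensorProduct.map ((Algebra.linearMap R H) ∘ₗ Coalgebra.counit)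
      ((Algebra.linearMap R H) ∘ₗ Coalgebra.counit) (Coalgebra.comul x)
    = algebraMap R (H ⊗[R] H) (Coalgebra.counit x) := by
  have r := Coalgebra.Repr.arbitrary R x
  rw [← r.eq, map_sum]
  have e : ∀ i ∈ r.index,
      TensorProduct.map ((Algebra.linearMap R H) ∘ₗ Coalgebra.counit)
        ((Algebra.linearMap R H) ∘ₗ Coalgebra.counit) (r.left i ⊗ₜ[R] r.right i)
      = ((Coalgebra.counit (r.left i) : R) * Coalgebra.counit (r.right i))
          • ((1 : H) ⊗ₜ[R] (1 : H)) := by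
    intro i _
    rw [TensorProduct.map_tmul]
    simp only [LinearMap.comp_apply, Algebra.linearMap_apply, Algebra.algebraMap_eq_smul_one]
    rw [TensorProduct.smul_tmul_smul]
  rw [Finset.sum_congr rfl e, ← Finset.sum_smul, aux_sum_counit]
  rw [Algebra.algebraMap_eq_smul_one, Algebra.TensorProduct.one_def]

theorem aux_inv2
    (hcoc : (TensorProduct.comm R H H).toLinearMap ∘ₗ Coalgebra.comul
      = (Coalgebra.comul : H →ₗ[R] H ⊗[R] H)) :
    cv R H Coalgebra.comul
        (TensorProduct.map (HopfAlgebra.antipode R) (HopfAlgebra.antipode R) ∘ₗ Coalgebra.comul)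
      = (Algebra.linearMap R (H ⊗[R] H)) ∘ₗ Coalgebra.counit := by
  apply LinearMap.ext; intro x
  simp only [cv, LinearMap.comp_apply, Algebra.linearMap_apply]
  have e1 : TensorProduct.map (Coalgebra.comul (R := R) (A := H))
      (TensorProduct.map (HopfAlgebra.antipode R) (HopfAlgebra.antipode R) ∘ₗ Coalgebra.comul)
      (Coalgebra.comul x)
      = TensorProduct.map (TensorProduct.map LinearMap.id LinearMap.id)
          (TensorProduct.map (HopfAlgebra.antipode R) (HopfAlgebra.antipode R))
          (TensorProduct.map Coalgebra.comul Coalgebra.comul (Coalgebra.comul x)) := by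
    rw [aux_map_map, TensorProduct.map_id, LinearMap.id_comp]
  rw [e1, aux_mul2_apply, aux_tttc_nat, aux_M_apply R H hcoc, aux_map_map, aux_map_map]
  have hopf : (LinearMap.mul' R H ∘ₗ
        TensorProduct.map LinearMap.id (HopfAlgebra.antipode (R := R) (A := H)))
          ∘ₗ Coalgebra.comul
      = Algebra.linearMap R H ∘ₗ Coalgebra.counit := by
    rw [LinearMap.comp_assoc]
    exact HopfAlgebra.mul_antipode_lTensor_comul
  rw [hopf]
  exact aux_eps_eps R H x

theorem aux_comul_antipode
    (hcoc : (TensorProduct.comm R H H).toLinearMap ∘ₗ Coalgebra.comul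
      = (Coalgebra.comul : H →ₗ[R] H ⊗[R] H)) :
    Coalgebra.comul ∘ₗ HopfAlgebra.antipode (R := R) (A := H)
      = TensorProduct.map (HopfAlgebra.antipode R) (HopfAlgebra.antipode R) ∘ₗ Coalgebra.comul := by
  calc Coalgebra.comul ∘ₗ HopfAlgebra.antipode (R := R) (A := H)
      = cv R H (Coalgebra.comul ∘ₗ (HopfAlgebra.antipode R))
          ((Algebra.linearMap R (H ⊗[R] H)) ∘ₗ Coalgebra.counit) :=
        (cv_unit_right R H _).symm
    _ = cv R H (Coalgebra.comul ∘ₗ (HopfAlgebra.antipode R))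
          (cv R H Coalgebra.comul
            (TensorProduct.map (HopfAlgebra.antipode R) (HopfAlgebra.antipode R) ∘ₗ Coalgebra.comul)) := by
        rw [aux_inv2 R H hcoc]
    _ = cv R H (cv R H (Coalgebra.comul ∘ₗ (HopfAlgebra.antipode R)) Coalgebra.comul)
          (TensorProduct.map (HopfAlgebra.antipode R) (HopfAlgebra.antipode R) ∘ₗ Coalgebra.comul) :=
        (cv_assoc R H _ _ _).symm
    _ = cv R H ((Algebra.linearMap R (H ⊗[R] H)) ∘ₗ Coalgebra.counit)
          (TensorProduct.map (HopfAlgebra.antipode R) (HopfAlgebra.antipode R) ∘ₗ Coalgebra.comul) := by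
        rw [aux_inv1 R H]
    _ = TensorProduct.map (HopfAlgebra.antipode R) (HopfAlgebra.antipode R) ∘ₗ Coalgebra.comul :=
        cv_unit_left R H _

/-! ### P2 : the convolution inverse of `m` is comul-compatible -/

theorem aux_P2
    (hcoc : (TensorProduct.comm R H H).toLinearMap ∘ₗ Coalgebra.comul
      = (Coalgebra.comul : H →ₗ[R] H ⊗[R] H)) :
    Coalgebra.comul ∘ₗ
        (LinearMap.mul' R H ∘ₗ TensorProduct.map (HopfAlgebra.antipode R) (HopfAlgebra.antipode R))
      = TensorProduct.map
          (LinearMap.mul' R H ∘ₗ TensorProduct.map (HopfAlgebra.antipode R) (HopfAlgebra.antipode R))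
          (LinearMap.mul' R H ∘ₗ TensorProduct.map (HopfAlgebra.antipode R) (HopfAlgebra.antipode R))
          ∘ₗ comul2 R H := by
  apply LinearMap.ext; intro z
  simp only [LinearMap.comp_apply]
  rw [aux_L1_apply, aux_map_map, aux_comul_antipode R H hcoc, ← aux_map_map, aux_mul2_apply,
    aux_tttc_nat, aux_map_map]
  rfl

/-! ### P1 : `(c ⋆ m) ⋆ (m ∘ (S ⊗ S)) = c` -/

theorem aux_S2 (c' : H ⊗[R] H →ₗ[R] H) :
    LinearMap.mul' R H ∘ₗ
      TensorProduct.map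
        (LinearMap.mul' R H ∘ₗ TensorProduct.map c' (LinearMap.mul' R H) ∘ₗ
          (TensorProduct.tensorTensorTensorComm R H H H H).toLinearMap)
        (LinearMap.mul' R H ∘ₗ
          TensorProduct.map (HopfAlgebra.antipode R) (HopfAlgebra.antipode R)) ∘ₗ
      (TensorProduct.tensorTensorTensorComm R (H ⊗[R] H) H (H ⊗[R] H) H).toLinearMap
    = LinearMap.mul' R H ∘ₗ TensorProduct.map c' (LinearMap.mul' R H) ∘ₗ
        (TensorProduct.tensorTensorTensorComm R H H H H).toLinearMap ∘ₗ
        TensorProduct.map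
          (TensorProduct.map LinearMap.id
              (LinearMap.mul' R H ∘ₗ TensorProduct.map LinearMap.id (HopfAlgebra.antipode R))
            ∘ₗ (TensorProduct.assoc R H H H).toLinearMap)
          (TensorProduct.map LinearMap.id
              (LinearMap.mul' R H ∘ₗ TensorProduct.map LinearMap.id (HopfAlgebra.antipode R))
            ∘ₗ (TensorProduct.assoc R H H H).toLinearMap) := by
  ext a b u p q v
  simp [Algebra.TensorProduct.tmul_mul_tmul, mul_assoc, mul_left_comm, mul_comm]

theorem aux_j :
    TensorProduct.map LinearMap.id (Algebra.linearMap R H) ∘ₗ (TensorProduct.mk R H R).flip 1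
      = (TensorProduct.mk R H H).flip 1 := by
  apply LinearMap.ext; intro x
  simp

theorem aux_comp1 :
    (TensorProduct.map LinearMap.id
        (LinearMap.mul' R H ∘ₗ TensorProduct.map LinearMap.id (HopfAlgebra.antipode R))
      ∘ₗ (TensorProduct.assoc R H H H).toLinearMap)
    ∘ₗ (TensorProduct.map Coalgebra.comul LinearMap.id ∘ₗ Coalgebra.comul)
    = (TensorProduct.mk R H H).flip 1 := by
  have c1 : (TensorProduct.assoc R H H H).toLinearMap ∘ₗ
      (TensorProduct.map (Coalgebra.comul (R := R) (A := H)) LinearMap.id ∘ₗ Coalgebra.comul)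
      = TensorProduct.map LinearMap.id Coalgebra.comul ∘ₗ Coalgebra.comul :=
    Coalgebra.coassoc
  rw [LinearMap.comp_assoc, c1, ← LinearMap.comp_assoc, ← TensorProduct.map_comp]
  have hopf2 : (LinearMap.mul' R H ∘ₗ
        TensorProduct.map LinearMap.id (HopfAlgebra.antipode (R := R) (A := H)))
          ∘ₗ Coalgebra.comul
      = Algebra.linearMap R H ∘ₗ Coalgebra.counit := by
    rw [LinearMap.comp_assoc]
    exact HopfAlgebra.mul_antipode_lTensor_comul
  rw [hopf2, TensorProduct.map_comp, LinearMap.comp_assoc]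
  have c2 : TensorProduct.map LinearMap.id (Coalgebra.counit (R := R) (A := H)) ∘ₗ
      Coalgebra.comul = (TensorProduct.mk R H R).flip 1 :=
    Coalgebra.lTensor_counit_comp_comul
  rw [c2, aux_j]

theorem aux_fin (c' : H ⊗[R] H →ₗ[R] H) :
    LinearMap.mul' R H ∘ₗ TensorProduct.map c' (LinearMap.mul' R H) ∘ₗ
      (TensorProduct.tensorTensorTensorComm R H H H H).toLinearMap ∘ₗ
      TensorProduct.map ((TensorProduct.mk R H H).flip 1) ((TensorProduct.mk R H H).flip 1)
    = c' := by
  apply TensorProduct.ext'; intro x y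
  simp

theorem aux_P1 (c : H ⊗[R] H →ₗ[R] H) :
    conv2 R H (conv2 R H c (LinearMap.mul' R H))
      (LinearMap.mul' R H ∘ₗ TensorProduct.map (HopfAlgebra.antipode R) (HopfAlgebra.antipode R))
    = c := by
  apply LinearMap.ext; intro z
  show LinearMap.mul' R H (TensorProduct.map (conv2 R H c (LinearMap.mul' R H))
      (LinearMap.mul' R H ∘ₗ TensorProduct.map (HopfAlgebra.antipode R) (HopfAlgebra.antipode R))
      ((TensorProduct.tensorTensorTensorComm R H H H H)
        (TensorProduct.map Coalgebra.comul Coalgebra.comul z))) = c z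
  have hc : conv2 R H c (LinearMap.mul' R H)
      = (LinearMap.mul' R H ∘ₗ TensorProduct.map c (LinearMap.mul' R H) ∘ₗ
          (TensorProduct.tensorTensorTensorComm R H H H H).toLinearMap)
        ∘ₗ TensorProduct.map Coalgebra.comul Coalgebra.comul := rfl
  have hminv : (LinearMap.mul' R H ∘ₗ
        TensorProduct.map (HopfAlgebra.antipode (R := R) (A := H)) (HopfAlgebra.antipode R))
      = (LinearMap.mul' R H ∘ₗ TensorProduct.map (HopfAlgebra.antipode R) (HopfAlgebra.antipode R))
        ∘ₗ (LinearMap.id : H ⊗[R] H →ₗ[R] H ⊗[R] H) := (LinearMap.comp_id _).symm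
  rw [hc, hminv, ← aux_map_map]
  rw [show (LinearMap.id : H ⊗[R] H →ₗ[R] H ⊗[R] H)
      = TensorProduct.map LinearMap.id LinearMap.id from (TensorProduct.map_id).symm]
  rw [← aux_tttc_nat, aux_map_map]
  have s2 := LinearMap.congr_fun (aux_S2 R H c)
    (TensorProduct.map (TensorProduct.map Coalgebra.comul LinearMap.id ∘ₗ Coalgebra.comul)
      (TensorProduct.map Coalgebra.comul LinearMap.id ∘ₗ Coalgebra.comul) z)
  simp only [LinearMap.comp_apply, LinearEquiv.coe_coe] at s2
  rw [s2, aux_map_map, aux_comp1 R H]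
  have fin := LinearMap.congr_fun (aux_fin R H c) z
  simp only [LinearMap.comp_apply, LinearEquiv.coe_coe] at fin
  exact fin

/-- For a normalized, conormalized Laplace pairing `c` with circle (hash) product
`# = c ⋆ m`, the tuple `(H, #, η, Δ, ε)` is a bialgebra — `Δ∘# = (#⊗#)∘(id⊗sw⊗id)∘(Δ⊗Δ)`
and `ε(x # y) = ε(x)ε(y)` — if and only if `c` satisfies condition (e). -/
theorem hash_bialgebra_iff_condE
    (hcoc : (TensorProduct.comm R H H).toLinearMap ∘ₗ Coalgebra.comul
      = (Coalgebra.comul : H →ₗ[R] H ⊗[R] H))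
    (c : H ⊗[R] H →ₗ[R] H) (hlap : IsLaplace R H c)
    (hnorm : ∀ x : H, c (x ⊗ₜ[R] 1) = (Coalgebra.counit x : R) • (1 : H) ∧
      c ((1 : H) ⊗ₜ[R] x) = (Coalgebra.counit x : R) • (1 : H))
    (hconorm : ∀ x y : H, Coalgebra.counit (c (x ⊗ₜ[R] y))
      = (Coalgebra.counit x : R) * Coalgebra.counit y) :
    (Coalgebra.comul ∘ₗ conv2 R H c (LinearMap.mul' R H)
        = TensorProduct.map (conv2 R H c (LinearMap.mul' R H))
            (conv2 R H c (LinearMap.mul' R H)) ∘ₗ comul2 R H ∧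
      Coalgebra.counit ∘ₗ conv2 R H c (LinearMap.mul' R H) = counit2 R H) ↔
    CondE R H c := by
  constructor
  · rintro ⟨h1, -⟩
    have key := aux_key R H hcoc (conv2 R H c (LinearMap.mul' R H))
      (LinearMap.mul' R H ∘ₗ TensorProduct.map (HopfAlgebra.antipode R) (HopfAlgebra.antipode R))
      h1 (aux_P2 R H hcoc)
    rw [aux_P1 R H c] at key
    exact key
  · intro hE
    exact ⟨aux_key R H hcoc c (LinearMap.mul' R H) hE (aux_hm R H),
      aux_counit_part R H c hconorm⟩
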